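/- Pinsker-type one-step mirror descent inequality for softmax policies: let A be a finite set, let π_k, π_{k+1}, π', π* be strictly positive probability distributions on A with π_k ∝ exp(f_k/τ_k), π_{k+1} ∝ exp(f_{k+1}/τ_{k+1}), π' ∝ exp(q/β + f_k/τ_k). Then KL(π*∥π_{k+1}) − KL(π*∥π_k) ≤ ⟨log(π_{k+1}/π'), π_k − π*⟩ − β^{-1}⟨q, π* − π_k⟩ − (1/2)‖π_{k+1} − π_k‖₁² − ⟨τ_{k+1}^{-1} f_{k+1} − τ_k^{-1} f_k, π_k − π_{k+1}⟩, where log(π_{k+1}/π') denotes the pointwise log-ratio, ⟨u,v⟩ = Σ_a u(a)v(a), and ‖·‖₁ is the ℓ₁ norm. -/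

import Mathlib

section Aux

open Real Set

private noncomputable def hfun (x : ℝ) : ℝ := (x + 1) * Real.log x - 2 * (x - 1)
private noncomputable def gfun (x : ℝ) : ℝ :=
  (x + 2) * (x * Real.log x - x + 1) - 3 / 2 * (x - 1) ^ 2

private lemma hfun_hasDeriv {x : ℝ} (hx : 0 < x) :
    HasDerivAt hfun (Real.log x + x⁻¹ - 1) x := by
  have h1 : HasDerivAt (fun x : ℝ => (x + 1) * Real.log x)
      (1 * Real.log x + (x + 1) * x⁻¹) x :=
    (((hasDerivAt_id x).add_const 1).mul (Real.hasDerivAt_log hx.ne'))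
  have h2 : HasDerivAt (fun x : ℝ => 2 * (x - 1)) 2 x := by
    simpa using ((hasDerivAt_id x).sub_const 1).const_mul 2
  have := h1.sub h2
  convert this using 1
  · exact rfl
  · exact rfl
  · exact rfl
  field_simp
  ring

private lemma gfun_hasDeriv {x : ℝ} (hx : 0 < x) :
    HasDerivAt gfun (2 * hfun x) x := by
  have hl : HasDerivAt (fun x : ℝ => x * Real.log x - x + 1) (Real.log x) x := by
    have h1 : HasDerivAt (fun x : ℝ => x * Real.log x) (1 * Real.log x + x * x⁻¹) x :=
      (hasDerivAt_id x).mul (Real.hasDerivAt_log hx.ne')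
    have := (h1.sub (hasDerivAt_id x)).add_const 1
    convert this using 1
    · exact rfl
    · exact rfl
    · exact rfl
    field_simp
    ring
  have h2 : HasDerivAt (fun x : ℝ => (x + 2) * (x * Real.log x - x + 1))
      (1 * (x * Real.log x - x + 1) + (x + 2) * Real.log x) x :=
    ((hasDerivAt_id x).add_const 2).mul hl
  have h3 : HasDerivAt (fun x : ℝ => 3 / 2 * (x - 1) ^ 2) (3 / 2 * (2 * (x - 1))) x := by
    have := (((hasDerivAt_id x).sub_const 1).pow 2).const_mul (3 / 2 : ℝ)
    simpa using this
  have := h2.sub h3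
  convert this using 1
  · exact rfl
  · exact rfl
  · exact rfl
  unfold hfun
  ring

private lemma hfun_nonneg {x : ℝ} (hx : 1 ≤ x) : 0 ≤ hfun x := by
  have hmono : MonotoneOn hfun (Ioi (0 : ℝ)) := by
    refine monotoneOn_of_deriv_nonneg (convex_Ioi 0) ?_ ?_ ?_
    · intro y hy
      exact ((hfun_hasDeriv hy).continuousAt).continuousWithinAt
    · intro y hy
      rw [interior_Ioi] at hy
      exact (hfun_hasDeriv hy).differentiableAt.differentiableWithinAt
    · intro y hy
      rw [interior_Ioi] at hy
      rw [(hfun_hasDeriv hy).deriv]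
      have := Real.one_sub_inv_le_log_of_pos hy
      linarith
  have h1 : hfun 1 = 0 := by simp [hfun]
  have := hmono (mem_Ioi.2 one_pos) (mem_Ioi.2 (lt_of_lt_of_le one_pos hx)) hx
  linarith
private lemma hfun_nonpos {x : ℝ} (hx : 0 < x) (hx1 : x ≤ 1) : hfun x ≤ 0 := by
  have hmono : MonotoneOn hfun (Ioi (0 : ℝ)) := by
    refine monotoneOn_of_deriv_nonneg (convex_Ioi 0) ?_ ?_ ?_
    · intro y hy
      exact ((hfun_hasDeriv hy).continuousAt).continuousWithinAt
    · intro y hy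
      rw [interior_Ioi] at hy
      exact (hfun_hasDeriv hy).differentiableAt.differentiableWithinAt
    · intro y hy
      rw [interior_Ioi] at hy
      rw [(hfun_hasDeriv hy).deriv]
      have := Real.one_sub_inv_le_log_of_pos hy
      linarith
  have h1 : hfun 1 = 0 := by simp [hfun]
  have := hmono (mem_Ioi.2 hx) (mem_Ioi.2 one_pos) hx1
  linarith

private lemma gfun_nonneg {x : ℝ} (hx : 0 < x) : 0 ≤ gfun x := by
  have hg1 : gfun 1 = 0 := by simp [gfun]
  rcases le_total 1 x with h | h
  · have hmono : MonotoneOn gfun (Ici (1 : ℝ)) := by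
      refine monotoneOn_of_deriv_nonneg (convex_Ici 1) ?_ ?_ ?_
      · intro y hy
        exact ((gfun_hasDeriv (lt_of_lt_of_le one_pos hy)).continuousAt).continuousWithinAt
      · intro y hy
        rw [interior_Ici] at hy
        exact (gfun_hasDeriv (lt_trans one_pos hy)).differentiableAt.differentiableWithinAt
      · intro y hy
        rw [interior_Ici] at hy
        rw [(gfun_hasDeriv (lt_trans one_pos hy)).deriv]
        have := hfun_nonneg (le_of_lt hy)
        linarith
    have := hmono (mem_Ici.2 le_rfl) (mem_Ici.2 h) h
    linarith
  · have hanti : AntitoneOn gfun (Ioc (0 : ℝ) 1) := by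
      refine antitoneOn_of_deriv_nonpos (convex_Ioc 0 1) ?_ ?_ ?_
      · intro y hy
        exact ((gfun_hasDeriv hy.1).continuousAt).continuousWithinAt
      · intro y hy
        rw [interior_Ioc] at hy
        exact (gfun_hasDeriv hy.1).differentiableAt.differentiableWithinAt
      · intro y hy
        rw [interior_Ioc] at hy
        rw [(gfun_hasDeriv hy.1).deriv]
        have := hfun_nonpos hy.1 hy.2.le
        linarith
    have := hanti (mem_Ioc.2 ⟨hx, h⟩) (mem_Ioc.2 ⟨one_pos, le_rfl⟩) h
    linarith

private lemma pointwise_kl {a b : ℝ} (ha : 0 < a) (hb : 0 < b) :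
    3 * (a - b) ^ 2 / (2 * (a + 2 * b)) ≤ a * (Real.log a - Real.log b) - a + b := by
  set x := a / b with hxdef
  have hx : 0 < x := div_pos ha hb
  have hg := gfun_nonneg hx
  have hlog : Real.log x = Real.log a - Real.log b := Real.log_div ha.ne' hb.ne'
  have hxb : x * b = a := div_mul_cancel₀ a hb.ne'
  have key : (a + 2 * b) * (a * (Real.log a - Real.log b) - a + b) - 3 / 2 * (a - b) ^ 2
      = b ^ 2 * gfun x := by
    unfold gfun
    rw [hlog, hxdef]
    field_simp
  have key2 : 0 ≤ b ^ 2 * gfun x := mul_nonneg (by positivity) hg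
  rw [div_le_iff₀ (by positivity)]
  nlinarith [key, key2]
private lemma pinsker_fin {A : Type*} [Fintype A] (p q : A → ℝ)
    (hp : ∀ a, 0 < p a) (hq : ∀ a, 0 < q a)
    (hps : ∑ a, p a = 1) (hqs : ∑ a, q a = 1) :
    1 / 2 * (∑ a, |p a - q a|) ^ 2 ≤ ∑ a, p a * (Real.log (p a) - Real.log (q a)) := by
  have hsum3 : ∑ a, (p a + 2 * q a) = 3 := by
    rw [Finset.sum_add_distrib, hps, ← Finset.mul_sum, hqs]; norm_num
  have hCS := Finset.sq_sum_div_le_sum_sq_div Finset.univ (fun a => |p a - q a|)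
      (g := fun a => p a + 2 * q a) (fun a _ => by have := hp a; have := hq a; positivity)
  rw [hsum3] at hCS
  have hpt : ∑ a, 3 * (p a - q a) ^ 2 / (2 * (p a + 2 * q a)) ≤
      ∑ a, (p a * (Real.log (p a) - Real.log (q a)) - p a + q a) :=
    Finset.sum_le_sum fun a _ => pointwise_kl (hp a) (hq a)
  have hre : ∑ a, (p a * (Real.log (p a) - Real.log (q a)) - p a + q a)
      = ∑ a, p a * (Real.log (p a) - Real.log (q a)) := by
    rw [Finset.sum_add_distrib, Finset.sum_sub_distrib, hps, hqs]; ring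
  rw [hre] at hpt
  have heq : ∑ a, 3 * (p a - q a) ^ 2 / (2 * (p a + 2 * q a))
      = 3 / 2 * ∑ a, |p a - q a| ^ 2 / (p a + 2 * q a) := by
    rw [Finset.mul_sum]
    refine Finset.sum_congr rfl fun a _ => ?_
    have h1 : (0:ℝ) < p a + 2 * q a := by have := hp a; have := hq a; positivity
    rw [sq_abs]; field_simp
  linarith [hCS, hpt, heq]
end Aux

open Finset

/-- One-step mirror-descent (Pinsker-type) inequality for softmax policies. -/
theorem one_step_descent {A : Type*} [Fintype A] [Nonempty A]
    (fk fk1 q : A → ℝ) (τk τk1 β : ℝ) (hτk : 0 < τk) (hτk1 : 0 < τk1) (hβ : 0 < β)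
    (πk πk1 π' πstar : A → ℝ)
    (hπk : ∀ a, πk a = Real.exp (fk a / τk) / ∑ b, Real.exp (fk b / τk))
    (hπk1 : ∀ a, πk1 a = Real.exp (fk1 a / τk1) / ∑ b, Real.exp (fk1 b / τk1))
    (hπ' : ∀ a, π' a =
      Real.exp (q a / β + fk a / τk) / ∑ b, Real.exp (q b / β + fk b / τk))
    (hπsnn : ∀ a, 0 ≤ πstar a) (hπssum : ∑ a, πstar a = 1) :
    (∑ a, πstar a * Real.log (πstar a / πk1 a))
      - (∑ a, πstar a * Real.log (πstar a / πk a)) ≤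
    (∑ a, Real.log (πk1 a / π' a) * (πk a - πstar a))
      - β⁻¹ * (∑ a, q a * (πstar a - πk a))
      - 1 / 2 * (∑ a, |πk1 a - πk a|) ^ 2
      - ∑ a, (τk1⁻¹ * fk1 a - τk⁻¹ * fk a) * (πk a - πk1 a) := by
  classical
  have hSk : (0:ℝ) < ∑ b, Real.exp (fk b / τk) :=
    Finset.sum_pos (fun b _ => Real.exp_pos _) Finset.univ_nonempty
  have hSk1 : (0:ℝ) < ∑ b, Real.exp (fk1 b / τk1) :=
    Finset.sum_pos (fun b _ => Real.exp_pos _) Finset.univ_nonempty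
  have hS' : (0:ℝ) < ∑ b, Real.exp (q b / β + fk b / τk) :=
    Finset.sum_pos (fun b _ => Real.exp_pos _) Finset.univ_nonempty
  have hπkpos : ∀ a, 0 < πk a := fun a => by
    rw [hπk a]; exact div_pos (Real.exp_pos _) hSk
  have hπk1pos : ∀ a, 0 < πk1 a := fun a => by
    rw [hπk1 a]; exact div_pos (Real.exp_pos _) hSk1
  have hπ'pos : ∀ a, 0 < π' a := fun a => by
    rw [hπ' a]; exact div_pos (Real.exp_pos _) hS'
  have hπksum : ∑ a, πk a = 1 := by
    simp_rw [hπk]; rw [← Finset.sum_div, div_self hSk.ne']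
  have hπk1sum : ∑ a, πk1 a = 1 := by
    simp_rw [hπk1]; rw [← Finset.sum_div, div_self hSk1.ne']
  set lk : ℝ := Real.log (∑ b, Real.exp (fk b / τk)) with hlkdef
  set lk1 : ℝ := Real.log (∑ b, Real.exp (fk1 b / τk1)) with hlk1def
  set l' : ℝ := Real.log (∑ b, Real.exp (q b / β + fk b / τk)) with hl'def
  have hlogk : ∀ a, Real.log (πk a) = fk a / τk - lk := fun a => by
    rw [hπk a, Real.log_div (Real.exp_pos _).ne' hSk.ne', Real.log_exp]
  have hlogk1 : ∀ a, Real.log (πk1 a) = fk1 a / τk1 - lk1 := fun a => by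
    rw [hπk1 a, Real.log_div (Real.exp_pos _).ne' hSk1.ne', Real.log_exp]
  have hlog' : ∀ a, Real.log (π' a) = q a / β + fk a / τk - l' := fun a => by
    rw [hπ' a, Real.log_div (Real.exp_pos _).ne' hS'.ne', Real.log_exp]
  have h0 : ∑ a, (πk a - πstar a) = 0 := by
    rw [Finset.sum_sub_distrib, hπksum, hπssum, sub_self]
  -- E12
  have e12 : (∑ a, πstar a * Real.log (πstar a / πk1 a))
      - (∑ a, πstar a * Real.log (πstar a / πk a))
      = -(∑ a, (fk1 a / τk1 - fk a / τk) * πstar a) + (lk1 - lk) := by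
    rw [← Finset.sum_sub_distrib]
    have hterm : ∀ a ∈ Finset.univ,
        πstar a * Real.log (πstar a / πk1 a) - πstar a * Real.log (πstar a / πk a)
        = -((fk1 a / τk1 - fk a / τk) * πstar a) + (lk1 - lk) * πstar a := by
      intro a _
      rcases (hπsnn a).eq_or_lt with h | h
      · rw [← h]; ring
      · rw [Real.log_div h.ne' (hπk1pos a).ne', Real.log_div h.ne' (hπkpos a).ne',
          hlogk a, hlogk1 a]; ring
    rw [Finset.sum_congr rfl hterm, Finset.sum_add_distrib, Finset.sum_neg_distrib,
      ← Finset.mul_sum, hπssum, mul_one]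
  -- E3
  have e3 : ∑ a, Real.log (πk1 a / π' a) * (πk a - πstar a)
      = (∑ a, (fk1 a / τk1 - fk a / τk) * πk a)
        - (∑ a, (fk1 a / τk1 - fk a / τk) * πstar a)
        - (β⁻¹ * (∑ a, q a * πk a) - β⁻¹ * (∑ a, q a * πstar a)) := by
    have hterm : ∀ a ∈ Finset.univ, Real.log (πk1 a / π' a) * (πk a - πstar a)
        = ((fk1 a / τk1 - fk a / τk) * πk a - (fk1 a / τk1 - fk a / τk) * πstar a
            - (β⁻¹ * (q a * πk a) - β⁻¹ * (q a * πstar a)))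
          + (l' - lk1) * (πk a - πstar a) := by
      intro a _
      rw [Real.log_div (hπk1pos a).ne' (hπ'pos a).ne', hlogk1 a, hlog' a]
      field_simp
      ring
    rw [Finset.sum_congr rfl hterm, Finset.sum_add_distrib, ← Finset.mul_sum, h0, mul_zero,
      add_zero, Finset.sum_sub_distrib, Finset.sum_sub_distrib, Finset.sum_sub_distrib,
      ← Finset.mul_sum, ← Finset.mul_sum]
  -- E4
  have e4 : ∑ a, (fk1 a / τk1 - fk a / τk) * πk1 a
      = (∑ a, πk1 a * (Real.log (πk1 a) - Real.log (πk a))) + (lk1 - lk) := by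
    have hterm : ∀ a ∈ Finset.univ, (fk1 a / τk1 - fk a / τk) * πk1 a
        = πk1 a * (Real.log (πk1 a) - Real.log (πk a)) + (lk1 - lk) * πk1 a := by
      intro a _; rw [hlogk a, hlogk1 a]; ring
    rw [Finset.sum_congr rfl hterm, Finset.sum_add_distrib, ← Finset.mul_sum, hπk1sum, mul_one]
  -- E5
  have e5 : ∑ a, (τk1⁻¹ * fk1 a - τk⁻¹ * fk a) * (πk a - πk1 a)
      = (∑ a, (fk1 a / τk1 - fk a / τk) * πk a)
        - (∑ a, (fk1 a / τk1 - fk a / τk) * πk1 a) := by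
    rw [← Finset.sum_sub_distrib]
    refine Finset.sum_congr rfl fun a _ => ?_
    rw [inv_mul_eq_div, inv_mul_eq_div]
    ring
  -- E6
  have e6 : β⁻¹ * (∑ a, q a * (πstar a - πk a))
      = β⁻¹ * (∑ a, q a * πstar a) - β⁻¹ * (∑ a, q a * πk a) := by
    simp_rw [mul_sub, Finset.sum_sub_distrib]
    ring
  have pins := pinsker_fin πk1 πk hπk1pos hπkpos hπk1sum hπksum
  linarith [e12, e3, e4, e5, e6, pins]
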